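/- Let C be a preadditive category with a zero object and binary biproducts in which every Hom-set is finite. Then every object X of C is isomorphic to a biproduct of finitely many indecomposable objects; moreover, for any isomorphism X ≅ X₁ ⊞ X₂ ⊞ ⋯ ⊞ X_s with all X_i nonzero, the number of summands s is at most the cardinality of the endomorphism monoid End(X). -/

import Mathlib

open CategoryTheory CategoryTheory.Limits ZeroObject

/-- An object of a preadditive category with a zero object and binary biproducts is
*indecomposable* if it is nonzero and any biproduct decomposition has a zero summand. -/
def IsIndecomposableObj {C : Type*} [Category C] [Preadditive C]
    [HasZeroObject C] [HasBinaryBiproducts C] (X : C) : Prop :=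
  ¬ IsZero X ∧ ∀ A B : C, (X ≅ A ⊞ B) → IsZero A ∨ IsZero B

/-- The (iterated binary) biproduct `X₁ ⊞ (X₂ ⊞ (⋯ ⊞ 0))` of a finite list of objects. -/
noncomputable def listBiproduct {C : Type*} [Category C] [Preadditive C]
    [HasZeroObject C] [HasBinaryBiproducts C] (l : List C) : C :=
  l.foldr (fun X Y => X ⊞ Y) 0

section Helpers
set_option linter.unusedSectionVars false
variable {C : Type*} [Category C] [Preadditive C] [HasZeroObject C] [HasBinaryBiproducts C]

noncomputable def homToBiprodEquiv (X A B : C) : (X ⟶ A ⊞ B) ≃ (X ⟶ A) × (X ⟶ B) where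
  toFun f := (f ≫ biprod.fst, f ≫ biprod.snd)
  invFun p := biprod.lift p.1 p.2
  left_inv f := by apply biprod.hom_ext <;> simp
  right_inv p := by simp

noncomputable def biprodToHomEquiv (A B Y : C) : (A ⊞ B ⟶ Y) ≃ (A ⟶ Y) × (B ⟶ Y) where
  toFun f := (biprod.inl ≫ f, biprod.inr ≫ f)
  invFun p := biprod.desc p.1 p.2
  left_inv f := by apply biprod.hom_ext' <;> simp
  right_inv p := by simp

noncomputable def zeroBiprodIso (Y : C) : (0 : C) ⊞ Y ≅ Y where
  hom := biprod.snd
  inv := biprod.inr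
  hom_inv_id := by
    apply biprod.hom_ext'
    · apply (isZero_zero C).eq_of_src
    · simp

noncomputable def biprodZeroIso (Y : C) : Y ⊞ (0 : C) ≅ Y where
  hom := biprod.fst
  inv := biprod.inl
  hom_inv_id := by
    apply biprod.hom_ext'
    · simp
    · apply (isZero_zero C).eq_of_src

lemma card_biprod_end (A B : C) :
    Nat.card (A ⊞ B ⟶ A ⊞ B) =
      (Nat.card (A ⟶ A) * Nat.card (A ⟶ B)) * (Nat.card (B ⟶ A) * Nat.card (B ⟶ B)) := by
  rw [Nat.card_congr ((biprodToHomEquiv A B (A ⊞ B)).trans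
    ((homToBiprodEquiv A A B).prodCongr (homToBiprodEquiv B A B)))]
  simp [Nat.card_prod, mul_assoc]

lemma one_lt_card_end (homfin : ∀ X Y : C, Finite (X ⟶ Y)) {A : C} (hA : ¬ IsZero A) :
    1 < Nat.card (A ⟶ A) := by
  have : Finite (A ⟶ A) := homfin A A
  have h : (𝟙 A : A ⟶ A) ≠ 0 := fun h => hA ((IsZero.iff_id_eq_zero A).2 h)
  have : Nontrivial (A ⟶ A) := ⟨⟨𝟙 A, 0, h⟩⟩
  exact Finite.one_lt_card

lemma card_end_pos (homfin : ∀ X Y : C, Finite (X ⟶ Y)) (X Y : C) :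
    0 < Nat.card (X ⟶ Y) := by
  have : Finite (X ⟶ Y) := homfin X Y
  exact Nat.card_pos

lemma card_lt_left (homfin : ∀ X Y : C, Finite (X ⟶ Y)) {A B : C} (hB : ¬ IsZero B) :
    Nat.card (A ⟶ A) < Nat.card (A ⊞ B ⟶ A ⊞ B) := by
  rw [card_biprod_end]
  rw [mul_assoc]
  have h1 : 1 < Nat.card (B ⟶ B) := one_lt_card_end homfin hB
  have h2 : 1 < Nat.card (B ⟶ A) * Nat.card (B ⟶ B) :=
    lt_of_lt_of_le h1 (Nat.le_mul_of_pos_left _ (card_end_pos homfin B A))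
  have h3 : 1 < Nat.card (A ⟶ B) * (Nat.card (B ⟶ A) * Nat.card (B ⟶ B)) :=
    lt_of_lt_of_le h2 (Nat.le_mul_of_pos_left _ (card_end_pos homfin A B))
  exact (lt_mul_iff_one_lt_right (card_end_pos homfin A A)).2 h3

lemma card_end_congr {X Y : C} (e : X ≅ Y) : Nat.card (X ⟶ X) = Nat.card (Y ⟶ Y) :=
  Nat.card_congr (e.homCongr e)

noncomputable def listBiproductAppend (l₁ l₂ : List C) :
    listBiproduct (l₁ ++ l₂) ≅ listBiproduct l₁ ⊞ listBiproduct l₂ := by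
  induction l₁ with
  | nil => exact (zeroBiprodIso _).symm
  | cons a l ih =>
      exact (biprod.mapIso (Iso.refl a) ih).trans (biprod.associator a _ _).symm
end Helpers

/-- In a Hom-finite preadditive category with a zero object and binary
biproducts, every object is isomorphic to a biproduct of finitely many indecomposable
objects; moreover, for any isomorphism `X ≅ X₁ ⊞ ⋯ ⊞ X_s` with all `X_i` nonzero, the
number `s` of summands is at most the cardinality of `End X`. -/
theorem statement5 (C : Type*) [Category C] [Preadditive C]
    [HasZeroObject C] [HasBinaryBiproducts C]
    (homfin : ∀ X Y : C, Finite (X ⟶ Y)) :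
    (∀ X : C, ∃ l : List C, (∀ Y ∈ l, IsIndecomposableObj Y) ∧
      Nonempty (X ≅ listBiproduct l))
    ∧ (∀ (X : C) (l : List C), (∀ Y ∈ l, ¬ IsZero Y) →
        Nonempty (X ≅ listBiproduct l) → l.length ≤ Nat.card (X ⟶ X)) := by
  constructor
  · -- Part 1: existence, by strong induction on `Nat.card (X ⟶ X)`
    have key : ∀ n : ℕ, ∀ X : C, Nat.card (X ⟶ X) ≤ n →
        ∃ l : List C, (∀ Y ∈ l, IsIndecomposableObj Y) ∧ Nonempty (X ≅ listBiproduct l) := by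
      intro n
      induction n with
      | zero =>
          intro X h
          exact absurd h (by have := card_end_pos homfin X X; omega)
      | succ n ih =>
          intro X h
          by_cases hX : IsZero X
          · exact ⟨[], by simp, ⟨hX.iso (isZero_zero C)⟩⟩
          by_cases hind : IsIndecomposableObj X
          · exact ⟨[X], by simpa using hind, ⟨(biprodZeroIso X).symm⟩⟩
          · rw [IsIndecomposableObj, not_and] at hind
            obtain ⟨A, hA⟩ := not_forall.1 (hind hX)
            obtain ⟨B, hB⟩ := not_forall.1 hA
            obtain ⟨e, hzero⟩ := not_forall.1 hB
            push_neg at hzero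
            obtain ⟨hAz, hBz⟩ := hzero
            have hcardA : Nat.card (A ⟶ A) ≤ n := by
              have := card_lt_left homfin (A := A) hBz
              rw [← card_end_congr e] at this
              omega
            have hcardB : Nat.card (B ⟶ B) ≤ n := by
              have := card_lt_left homfin (A := B) hAz
              rw [← card_end_congr (e.trans (biprod.braiding A B))] at this
              omega
            obtain ⟨lA, hlA, ⟨eA⟩⟩ := ih A hcardA
            obtain ⟨lB, hlB, ⟨eB⟩⟩ := ih B hcardB
            refine ⟨lA ++ lB, ?_, ⟨e.trans ((biprod.mapIso eA eB).trans
              (listBiproductAppend lA lB).symm)⟩⟩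
            intro Y hY
            rcases List.mem_append.1 hY with h' | h'
            · exact hlA Y h'
            · exact hlB Y h'
    intro X
    exact key (Nat.card (X ⟶ X)) X le_rfl
  · -- Part 2: the length bound, by induction on the list
    intro X l
    induction l generalizing X with
    | nil => intro _ _; simp
    | cons a l ih =>
        rintro hnz ⟨e⟩
        have ha : ¬ IsZero a := hnz a (List.mem_cons_self (a := a) (l := l))
        have hlen : l.length ≤ Nat.card (listBiproduct l ⟶ listBiproduct l) :=
          ih (listBiproduct l) (fun Y hY => hnz Y (List.mem_cons_of_mem a hY)) ⟨Iso.refl _⟩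
        have hcard : Nat.card (X ⟶ X) =
            (Nat.card (a ⟶ a) * Nat.card (a ⟶ listBiproduct l)) *
            (Nat.card (listBiproduct l ⟶ a) *
              Nat.card (listBiproduct l ⟶ listBiproduct l)) := by
          rw [card_end_congr e]
          show Nat.card ((a ⊞ listBiproduct l : C) ⟶ a ⊞ listBiproduct l) = _
          rw [card_biprod_end]
        have h2 : 2 ≤ Nat.card (a ⟶ a) := one_lt_card_end homfin ha
        have p1 := card_end_pos homfin a (listBiproduct l)
        have p2 := card_end_pos homfin (listBiproduct l) a
        have p3 := card_end_pos homfin (listBiproduct l) (listBiproduct l)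
        have : 2 * (1 * (1 * Nat.card (listBiproduct l ⟶ listBiproduct l))) ≤
            Nat.card (a ⟶ a) * (Nat.card (a ⟶ listBiproduct l) *
            (Nat.card (listBiproduct l ⟶ a) *
              Nat.card (listBiproduct l ⟶ listBiproduct l))) := by
          exact Nat.mul_le_mul h2 (Nat.mul_le_mul p1 (Nat.mul_le_mul p2 le_rfl))
        simp only [one_mul] at this
        rw [hcard, mul_assoc]
        simp only [List.length_cons]
        omega
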